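/- For every n ∈ ℕ with n ≥ 1, the normalization constant of ψ̂_{±n}(x) = e^{−x²/2} 𝓗_{±n}(x) is κ_n = κ_{−n} = π^{1/4} · 2^{n+1/2} · ((2n)!)^{1/2}; that is, ∫_ℝ e^{−x²} 𝓗_{±n}(x)² dx = √π · 2^{2n+1} · (2n)!, so that κ_n^{−1} ψ̂_{±n} has L²(ℝ)-norm equal to 1. -/

import Mathlib

/-- The physicists' Hermite polynomial, via the Rodrigues formula
`H n x = (-1)^n e^(x²) (dⁿ/dxⁿ) e^(-x²)`. -/
noncomputable def physHermite (n : ℕ) (x : ℝ) : ℝ :=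
    (-1 : ℝ) ^ n * Real.exp (x ^ 2) * iteratedDeriv n (fun y : ℝ => Real.exp (-y ^ 2)) x

/-- The supersymmetric Hermite polynomial `𝓗_{εn} = H_{2n} + ε 2√n H_{2n-1}` for `n ≥ 1`
(with sign `ε = ±1`), and `𝓗₀ = 1`. -/
noncomputable def ssHermite (ε : ℝ) (n : ℕ) (x : ℝ) : ℝ :=
    if n = 0 then 1
    else physHermite (2 * n) x + ε * (2 * Real.sqrt n) * physHermite (2 * n - 1) x


open Polynomial MeasureTheory Real Filter Topology

noncomputable def PH : ℕ → ℝ[X]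
  | 0 => 1
  | n + 1 => C 2 * X * PH n - derivative (PH n)

lemma PH_zero : PH 0 = 1 := rfl
lemma PH_succ (n : ℕ) : PH (n + 1) = C 2 * X * PH n - derivative (PH n) := rfl

lemma hasDerivAt_PE (q : ℝ[X]) (x : ℝ) :
    HasDerivAt (fun y : ℝ => eval y q * Real.exp (-y ^ 2))
      (eval x (derivative q - C 2 * X * q) * Real.exp (-x ^ 2)) x := by
  have h1 : HasDerivAt (fun y : ℝ => eval y q) (eval x (derivative q)) x := q.hasDerivAt x
  have h2 : HasDerivAt (fun y : ℝ => Real.exp (-y ^ 2))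
      (Real.exp (-x ^ 2) * (-(2 * x))) x := by
    have := ((hasDerivAt_pow 2 x).neg).exp
    simpa using this
  have := h1.fun_mul h2
  refine this.congr_deriv ?_
  simp only [eval_sub, eval_mul, eval_C, eval_X]
  ring

lemma rodrigues (n : ℕ) (x : ℝ) :
    deriv^[n] (fun y : ℝ => Real.exp (-y ^ 2)) x =
      (-1 : ℝ) ^ n * eval x (PH n) * Real.exp (-x ^ 2) := by
  induction n generalizing x with
  | zero => simp [PH_zero]
  | succ n ih =>
    replace ih : deriv^[n] _ = _ := funext ih
    rw [Function.iterate_succ_apply', ih]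
    have h := ((hasDerivAt_PE (PH n) x).const_mul ((-1 : ℝ) ^ n)).deriv
    have hfun : (fun y : ℝ => (-1 : ℝ) ^ n * (eval y (PH n) * Real.exp (-y ^ 2))) =
        fun y : ℝ => (-1 : ℝ) ^ n * eval y (PH n) * Real.exp (-y ^ 2) := by
      funext y; ring
    rw [hfun] at h
    rw [h, PH_succ]
    simp only [eval_sub, eval_mul, eval_C, eval_X, pow_succ]
    ring

lemma integrable_PE (q : ℝ[X]) :
    Integrable fun x : ℝ => eval x q * Real.exp (-x ^ 2) := by
  induction q using Polynomial.induction_on' with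
  | add p q hp hq => simpa [add_mul] using hp.fun_add hq
  | monomial n c =>
    have hint := (integrable_exp_neg_mul_sq (by norm_num : (0:ℝ) < 1/2)).const_mul
      (|c| * n.factorial * Real.exp (1/2))
    apply hint.mono'
    · exact Continuous.aestronglyMeasurable (by continuity)
    · filter_upwards with x
      have h1 : |x| ^ n ≤ (n.factorial : ℝ) * Real.exp |x| := by
        have h := Real.pow_div_factorial_le_exp |x| (abs_nonneg x) n
        rw [div_le_iff₀ (by positivity)] at h
        linarith
      have h2 : Real.exp |x| * Real.exp (-x ^ 2) ≤
          Real.exp (1/2) * Real.exp (-(1/2) * x ^ 2) := by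
        rw [← Real.exp_add, ← Real.exp_add]
        apply Real.exp_le_exp.2
        nlinarith [sq_nonneg (|x| - 1), sq_abs x]
      have e1 : ‖eval x ((monomial n) c) * Real.exp (-x ^ 2)‖ =
          |c| * |x| ^ n * Real.exp (-x ^ 2) := by
        simp [eval_monomial, abs_mul, abs_pow, Real.abs_exp]
      rw [e1]
      calc |c| * |x| ^ n * Real.exp (-x ^ 2)
          ≤ |c| * ((n.factorial : ℝ) * Real.exp |x|) * Real.exp (-x ^ 2) := by
            exact mul_le_mul_of_nonneg_right
              (mul_le_mul_of_nonneg_left h1 (abs_nonneg c)) (Real.exp_pos _).le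
        _ = |c| * n.factorial * (Real.exp |x| * Real.exp (-x ^ 2)) := by ring
        _ ≤ |c| * n.factorial * (Real.exp (1/2) * Real.exp (-(1/2) * x ^ 2)) := by
            exact mul_le_mul_of_nonneg_left h2 (by positivity)
        _ = |c| * n.factorial * Real.exp (1/2) * Real.exp (-(1/2) * x ^ 2) := by ring

lemma tendsto_PE_top (q : ℝ[X]) :
    Tendsto (fun x : ℝ => eval x q * Real.exp (-x ^ 2)) atTop (𝓝 0) := by
  have h2 : Tendsto (fun x : ℝ => Real.exp (x - x ^ 2)) atTop (𝓝 0) := by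
    apply Real.tendsto_exp_atBot.comp
    refine tendsto_atBot_mono (f := fun x : ℝ => 1 - x) (fun x => by show x - x ^ 2 ≤ 1 - x; nlinarith [sq_nonneg (x - 1)]) ?_
    simpa [sub_eq_add_neg] using
      tendsto_atBot_add_const_left atTop (1 : ℝ) tendsto_neg_atTop_atBot
  have h := q.tendsto_div_exp_atTop.mul h2
  rw [mul_zero] at h
  refine h.congr fun x => ?_
  rw [div_mul_eq_mul_div, mul_div_assoc, ← Real.exp_sub]
  congr 2
  ring

lemma tendsto_PE_bot (q : ℝ[X]) :
    Tendsto (fun x : ℝ => eval x q * Real.exp (-x ^ 2)) atBot (𝓝 0) := by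
  have h := (tendsto_PE_top (q.comp (-X))).comp tendsto_neg_atBot_atTop
  refine h.congr fun x => ?_
  simp [eval_comp, neg_sq]

lemma int_deriv_zero (q : ℝ[X]) :
    ∫ x : ℝ, eval x (derivative q - C 2 * X * q) * Real.exp (-x ^ 2) = 0 := by
  have := integral_of_hasDerivAt_of_tendsto (fun x => hasDerivAt_PE q x)
    (integrable_PE _) (tendsto_PE_bot q) (tendsto_PE_top q)
  simpa using this

lemma parts (q : ℝ[X]) :
    ∫ x : ℝ, eval x (C 2 * X * q) * Real.exp (-x ^ 2) =
      ∫ x : ℝ, eval x (derivative q) * Real.exp (-x ^ 2) := by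
  have h := int_deriv_zero q
  have hfun : (fun x : ℝ => eval x (derivative q - C 2 * X * q) * Real.exp (-x ^ 2)) =
      fun x : ℝ => eval x (derivative q) * Real.exp (-x ^ 2) -
        eval x (C 2 * X * q) * Real.exp (-x ^ 2) := by
    funext x; simp [sub_mul]
  rw [hfun, integral_sub (integrable_PE _) (integrable_PE _), sub_eq_zero] at h
  exact h.symm

lemma J_succ (q : ℝ[X]) (k : ℕ) :
    ∫ x : ℝ, eval x (q * PH (k + 1)) * Real.exp (-x ^ 2) =
      ∫ x : ℝ, eval x (derivative q * PH k) * Real.exp (-x ^ 2) := by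
  have hpoly : q * PH (k + 1) =
      (C 2 * X * (q * PH k) - derivative (q * PH k)) + derivative q * PH k := by
    rw [PH_succ, derivative_mul]; ring
  have hfun : (fun x : ℝ => eval x (q * PH (k + 1)) * Real.exp (-x ^ 2)) =
      fun x : ℝ =>
        eval x (C 2 * X * (q * PH k) - derivative (q * PH k)) * Real.exp (-x ^ 2) +
          eval x (derivative q * PH k) * Real.exp (-x ^ 2) := by
    funext x; rw [hpoly]; simp [add_mul]
  rw [hfun, integral_add (integrable_PE _) (integrable_PE _)]
  have hzero : ∫ x : ℝ,
      eval x (C 2 * X * (q * PH k) - derivative (q * PH k)) * Real.exp (-x ^ 2) = 0 := by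
    have hfun2 : (fun x : ℝ =>
        eval x (C 2 * X * (q * PH k) - derivative (q * PH k)) * Real.exp (-x ^ 2)) =
        fun x : ℝ => eval x (C 2 * X * (q * PH k)) * Real.exp (-x ^ 2) -
          eval x (derivative (q * PH k)) * Real.exp (-x ^ 2) := by
      funext x; simp [sub_mul]
    rw [hfun2, integral_sub (integrable_PE _) (integrable_PE _), sub_eq_zero, parts]
  rw [hzero, zero_add]

lemma J_eq (k : ℕ) (q : ℝ[X]) :
    ∫ x : ℝ, eval x (q * PH k) * Real.exp (-x ^ 2) =
      ∫ x : ℝ, eval x (derivative^[k] q) * Real.exp (-x ^ 2) := by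
  induction k generalizing q with
  | zero => simp [PH_zero]
  | succ k ih =>
    rw [J_succ, ih, Function.iterate_succ_apply]

lemma PH_derivative (n : ℕ) :
    derivative (PH (n + 1)) = C (2 * ((n : ℝ) + 1)) * PH n := by
  induction n with
  | zero => simp [PH_succ, PH_zero]
  | succ n ih =>
    have hC : C (2 * ((n : ℝ) + 1 + 1)) = C (2 * ((n : ℝ) + 1)) + C 2 := by
      rw [← C_add]; congr 1; ring
    rw [PH_succ (n + 1)]
    rw [derivative_sub, derivative_mul, derivative_mul, ih]
    rw [PH_succ n]
    simp only [derivative_mul, derivative_C, derivative_X, zero_mul, zero_add, mul_one]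
    push_cast
    linear_combination (derivative (PH n) - C 2 * X * PH n) * hC

lemma PH_iter_self (n : ℕ) :
    derivative^[n] (PH n) = C ((2 : ℝ) ^ n * n.factorial) := by
  induction n with
  | zero => simp [PH_zero]
  | succ n ih =>
    rw [Function.iterate_succ_apply, PH_derivative, iterate_derivative_C_mul, ih, ← C_mul]
    congr 1
    push_cast [Nat.factorial_succ]
    ring

lemma PH_iter_zero_self (m : ℕ) : derivative^[m + 1] (PH m) = 0 := by
  induction m with
  | zero => simp [PH_zero]
  | succ m ih =>
    rw [Function.iterate_succ_apply, PH_derivative, iterate_derivative_C_mul, ih, mul_zero]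

lemma PH_iter_zero {m k : ℕ} (h : m < k) : derivative^[k] (PH m) = 0 := by
  obtain ⟨j, rfl⟩ : ∃ j, k = j + (m + 1) := ⟨k - (m + 1), by omega⟩
  rw [Function.iterate_add_apply, PH_iter_zero_self]
  exact Function.iterate_fixed derivative_zero j

lemma int_C (c : ℝ) :
    ∫ x : ℝ, eval x (C c) * Real.exp (-x ^ 2) = c * Real.sqrt Real.pi := by
  simp only [eval_C]
  rw [MeasureTheory.integral_const_mul]
  congr 1
  have := integral_gaussian 1
  simpa using this

lemma int_PH_self (k : ℕ) :
    ∫ x : ℝ, eval x (PH k * PH k) * Real.exp (-x ^ 2) =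
      (2 : ℝ) ^ k * k.factorial * Real.sqrt Real.pi := by
  rw [J_eq, PH_iter_self, int_C]

lemma int_PH_cross {m k : ℕ} (h : m < k) :
    ∫ x : ℝ, eval x (PH m * PH k) * Real.exp (-x ^ 2) = 0 := by
  rw [J_eq, PH_iter_zero h]
  simp

lemma physHermite_eq (n : ℕ) (x : ℝ) : physHermite n x = eval x (PH n) := by
  unfold physHermite
  rw [iteratedDeriv_eq_iterate, rodrigues]
  have h1 : (-1 : ℝ) ^ n * (-1 : ℝ) ^ n = 1 := by rw [← mul_pow]; norm_num
  have h2 : Real.exp (x ^ 2) * Real.exp (-x ^ 2) = 1 := by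
    rw [← Real.exp_add]; simp
  calc (-1 : ℝ) ^ n * Real.exp (x ^ 2) * ((-1 : ℝ) ^ n * eval x (PH n) * Real.exp (-x ^ 2))
      = ((-1 : ℝ) ^ n * (-1 : ℝ) ^ n) * (Real.exp (x ^ 2) * Real.exp (-x ^ 2)) *
        eval x (PH n) := by ring
    _ = eval x (PH n) := by rw [h1, h2]; ring


/-- The normalization constant of `ψ̂_{εn}(x) = e^(-x²/2) 𝓗_{εn}(x)` is
`κₙ = π^(1/4) 2^(n+1/2) ((2n)!)^(1/2)`: one has
`∫ e^(-x²) 𝓗_{εn}(x)² dx = √π 2^(2n+1) (2n)!`, so `κₙ⁻¹ ψ̂_{εn}` has unit `L²` norm. -/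
theorem ssHermite_normalization (n : ℕ) (hn : 1 ≤ n) (ε : ℝ) (hε : ε = 1 ∨ ε = -1) :
    (∫ x : ℝ, Real.exp (-x ^ 2) * (ssHermite ε n x) ^ 2 =
      Real.sqrt Real.pi * 2 ^ (2 * n + 1) * (2 * n).factorial) ∧
    (∫ x : ℝ,
        ((Real.pi ^ ((1 : ℝ) / 4) * 2 ^ ((n : ℝ) + 1 / 2) *
            Real.sqrt ((2 * n).factorial))⁻¹ *
          (Real.exp (-x ^ 2 / 2) * ssHermite ε n x)) ^ 2 = 1) := by
  have hne : n ≠ 0 := by omega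
  obtain ⟨m, hm⟩ : ∃ m, 2 * n = m + 1 := ⟨2 * n - 1, by omega⟩
  have hm1 : 2 * n - 1 = m := by omega
  set c : ℝ := ε * (2 * Real.sqrt n) with hc
  have hss : ∀ x : ℝ, ssHermite ε n x = eval x (PH (2 * n)) + c * eval x (PH m) := by
    intro x
    rw [ssHermite, if_neg hne, physHermite_eq, physHermite_eq, hm1]
  have hc2 : c ^ 2 = 4 * n := by
    have hsq : Real.sqrt n ^ 2 = (n : ℝ) := Real.sq_sqrt (Nat.cast_nonneg n)
    rcases hε with h | h <;> rw [hc, h] <;> nlinarith [hsq]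
  have key : ∫ x : ℝ, Real.exp (-x ^ 2) * (ssHermite ε n x) ^ 2 =
      Real.sqrt Real.pi * 2 ^ (2 * n + 1) * (2 * n).factorial := by
    have hfun : (fun x : ℝ => Real.exp (-x ^ 2) * (ssHermite ε n x) ^ 2) =
        fun x : ℝ => eval x (PH (2 * n) * PH (2 * n)) * Real.exp (-x ^ 2) +
          ((2 * c) * (eval x (PH m * PH (2 * n)) * Real.exp (-x ^ 2)) +
            c ^ 2 * (eval x (PH m * PH m) * Real.exp (-x ^ 2))) := by
      funext x
      rw [hss x]
      simp only [eval_mul]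
      ring
    have hI1 : Integrable fun x : ℝ =>
        eval x (PH (2 * n) * PH (2 * n)) * Real.exp (-x ^ 2) := integrable_PE _
    have hI2 : Integrable fun x : ℝ =>
        2 * c * (eval x (PH m * PH (2 * n)) * Real.exp (-x ^ 2)) :=
      (integrable_PE _).const_mul _
    have hI3 : Integrable fun x : ℝ =>
        c ^ 2 * (eval x (PH m * PH m) * Real.exp (-x ^ 2)) :=
      (integrable_PE _).const_mul _
    have hI23 : Integrable fun x : ℝ =>
        2 * c * (eval x (PH m * PH (2 * n)) * Real.exp (-x ^ 2)) +
          c ^ 2 * (eval x (PH m * PH m) * Real.exp (-x ^ 2)) := hI2.add hI3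
    rw [hfun, integral_add hI1 hI23, integral_add hI2 hI3,
      MeasureTheory.integral_const_mul, MeasureTheory.integral_const_mul,
      int_PH_self, int_PH_self, int_PH_cross (by omega), hc2, hm]
    have h4 : (4 : ℝ) * n = 2 * ((m : ℝ) + 1) := by
      have h : ((2 * n : ℕ) : ℝ) = ((m + 1 : ℕ) : ℝ) := by exact_mod_cast hm
      push_cast at h
      linarith
    push_cast [Nat.factorial_succ, pow_succ]
    linear_combination ((2:ℝ) ^ m * m.factorial * Real.sqrt Real.pi) * h4
  refine ⟨key, ?_⟩
  set κ : ℝ := Real.pi ^ ((1 : ℝ) / 4) * 2 ^ ((n : ℝ) + 1 / 2) *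
      Real.sqrt ((2 * n).factorial) with hκdef
  have e1 : (Real.pi ^ ((1 : ℝ) / 4)) ^ 2 = Real.sqrt Real.pi := by
    rw [← Real.rpow_natCast (Real.pi ^ ((1 : ℝ) / 4)) 2, ← Real.rpow_mul Real.pi_nonneg,
      Real.sqrt_eq_rpow]
    norm_num
  have e2 : ((2 : ℝ) ^ ((n : ℝ) + 1 / 2)) ^ 2 = 2 ^ (2 * n + 1) := by
    rw [← Real.rpow_natCast ((2 : ℝ) ^ ((n : ℝ) + 1 / 2)) 2,
      ← Real.rpow_mul (by norm_num : (0:ℝ) ≤ 2), ← Real.rpow_natCast 2 (2 * n + 1)]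
    congr 1
    push_cast
    ring
  have e3 : (Real.sqrt ((2 * n).factorial : ℝ)) ^ 2 = ((2 * n).factorial : ℝ) :=
    Real.sq_sqrt (by positivity)
  have hκ2 : κ ^ 2 = Real.sqrt Real.pi * 2 ^ (2 * n + 1) * (2 * n).factorial := by
    rw [hκdef, mul_pow, mul_pow, e1, e2, e3]
  have hκpos : 0 < κ := by
    refine mul_pos (mul_pos ?_ ?_) ?_
    · exact Real.rpow_pos_of_pos Real.pi_pos _
    · exact Real.rpow_pos_of_pos (by norm_num) _
    · exact Real.sqrt_pos.2 (by exact_mod_cast (2 * n).factorial_pos)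
  have hfun2 : (fun x : ℝ => (κ⁻¹ * (Real.exp (-x ^ 2 / 2) * ssHermite ε n x)) ^ 2) =
      fun x : ℝ => κ⁻¹ ^ 2 * (Real.exp (-x ^ 2) * (ssHermite ε n x) ^ 2) := by
    funext x
    have he : Real.exp (-x ^ 2 / 2) ^ 2 = Real.exp (-x ^ 2) := by
      rw [pow_two, ← Real.exp_add]
      norm_num
    rw [mul_pow, mul_pow, he]
  rw [hfun2, MeasureTheory.integral_const_mul, key, ← hκ2, ← mul_pow, inv_mul_cancel₀ hκpos.ne', one_pow]
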